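/- Set x' := (1/2)(x ⊗ x + x ⊗ x³ + x³ ⊗ x − x³ ⊗ x³) and y' := y ⊗ y in the twisted tensor product algebra A ⊗̂ A. Then x'⁴ = 1 ⊗ 1, x'y' = y'x'³, and y'² = (1/2)(ζ(1 ⊗ 1) + x' − ζx'² + x'³). Consequently there is a unique K-algebra homomorphism Δ : A → A ⊗̂ A with Δ(x) = x' and Δ(y) = y'. -/

import Mathlib

open TensorProduct

/-- The defining relations of the second example: `x⁴ = 1`, `xy = yx³`, and
`y² = (1/2)(ζ + x - ζx² + x³)`. -/
inductive SecondRel (K : Type*) [Field K] (ζ : K) :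
    FreeAlgebra K (Fin 2) → FreeAlgebra K (Fin 2) → Prop
  | x_pow_four : SecondRel K ζ (FreeAlgebra.ι K 0 ^ 4) 1
  | x_mul_y : SecondRel K ζ (FreeAlgebra.ι K 0 * FreeAlgebra.ι K 1)
      (FreeAlgebra.ι K 1 * FreeAlgebra.ι K 0 ^ 3)
  | y_sq : SecondRel K ζ (FreeAlgebra.ι K 1 ^ 2)
      ((2 : K)⁻¹ • (ζ • (1 : FreeAlgebra K (Fin 2)) + FreeAlgebra.ι K 0
        - ζ • (FreeAlgebra.ι K 0 ^ 2) + FreeAlgebra.ι K 0 ^ 3))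

/-- The second example: the `K`-algebra generated by noncommuting elements `x`, `y`
subject to `x⁴ = 1`, `xy = yx³` and `y² = (1/2)(ζ + x - ζx² + x³)`. -/
abbrev SecondAlg (K : Type*) [Field K] (ζ : K) : Type _ := RingQuot (SecondRel K ζ)

/-- The generator `x` of the second example. -/
noncomputable def xS (K : Type*) [Field K] (ζ : K) : SecondAlg K ζ :=
  RingQuot.mkAlgHom K (SecondRel K ζ) (FreeAlgebra.ι K 0)

/-- The generator `y` of the second example. -/
noncomputable def yS (K : Type*) [Field K] (ζ : K) : SecondAlg K ζ :=
  RingQuot.mkAlgHom K (SecondRel K ζ) (FreeAlgebra.ι K 1)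

/-- The group `G = ℤ/2 × ℤ/2`, written multiplicatively. -/
abbrev GG : Type := Multiplicative (ZMod 2 × ZMod 2)

/-- `g₁ = (0,0)`. -/
def g1 : GG := Multiplicative.ofAdd (0, 0)
/-- `g₂ = (1,0)`. -/
def g2 : GG := Multiplicative.ofAdd (1, 0)
/-- `g₃ = (0,1)`. -/
def g3 : GG := Multiplicative.ofAdd (0, 1)
/-- `g₄ = (1,1)`. -/
def g4 : GG := Multiplicative.ofAdd (1, 1)

/-- The twisted multiplication of `A ⊗̂ A`:
`(a ⊗ b)(a' ⊗ b') = (1/4) ∑_{g,g'} θ(g,g') (a (g.a')) ⊗ ((g'.b) b')`,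
extended bilinearly. -/
noncomputable def twMul {K : Type*} [Field K] {B : Type*} [Ring B] [Algebra K B]
    {G : Type*} [Monoid G] [Fintype G]
    (ρ : G →* (B →ₐ[K] B)) (θ : G → G → K)
    (z w : B ⊗[K] B) : B ⊗[K] B :=
  (4 : K)⁻¹ • ∑ g : G, ∑ g' : G, θ g g' •
    (TensorProduct.map (LinearMap.mul' K B) (LinearMap.mul' K B))
      ((TensorProduct.tensorTensorTensorComm K B B B B)
        ((TensorProduct.map
            (TensorProduct.map LinearMap.id (ρ g').toLinearMap)
            (TensorProduct.map (ρ g).toLinearMap LinearMap.id))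
          (z ⊗ₜ[K] w)))


namespace TwAux
variable {K : Type*} [Field K] {B : Type*} [Ring B] [Algebra K B]
variable {G : Type*} [Monoid G] [Fintype G]

noncomputable def twL (ρ : G →* (B →ₐ[K] B)) (θ : G → G → K) :
    (B ⊗[K] B) ⊗[K] (B ⊗[K] B) →ₗ[K] B ⊗[K] B :=
  (4 : K)⁻¹ • ∑ g : G, ∑ g' : G, θ g g' •
    ((TensorProduct.map (LinearMap.mul' K B) (LinearMap.mul' K B)) ∘ₗ
      (TensorProduct.tensorTensorTensorComm K B B B B).toLinearMap ∘ₗ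
      (TensorProduct.map
        (TensorProduct.map LinearMap.id (ρ g').toLinearMap)
        (TensorProduct.map (ρ g).toLinearMap LinearMap.id)))

variable (ρ : G →* (B →ₐ[K] B)) (θ : G → G → K)

lemma twMul_eq (z w : B ⊗[K] B) : twMul ρ θ z w = twL ρ θ (z ⊗ₜ[K] w) := by
  simp [twMul, twL, LinearMap.sum_apply, LinearMap.smul_apply]

lemma twMul_add_left (u v w : B ⊗[K] B) :
    twMul ρ θ (u + v) w = twMul ρ θ u w + twMul ρ θ v w := by
  simp [twMul_eq, add_tmul]

lemma twMul_add_right (u v w : B ⊗[K] B) :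
    twMul ρ θ u (v + w) = twMul ρ θ u v + twMul ρ θ u w := by
  simp [twMul_eq, tmul_add]

lemma twMul_sub_left (u v w : B ⊗[K] B) :
    twMul ρ θ (u - v) w = twMul ρ θ u w - twMul ρ θ v w := by
  simp [twMul_eq, sub_tmul]

lemma twMul_sub_right (u v w : B ⊗[K] B) :
    twMul ρ θ u (v - w) = twMul ρ θ u v - twMul ρ θ u w := by
  simp [twMul_eq, tmul_sub]

lemma twMul_smul_left (c : K) (u w : B ⊗[K] B) :
    twMul ρ θ (c • u) w = c • twMul ρ θ u w := by
  rw [twMul_eq, twMul_eq, ← smul_tmul', map_smul]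

lemma twMul_smul_right (c : K) (u w : B ⊗[K] B) :
    twMul ρ θ u (c • w) = c • twMul ρ θ u w := by
  simp [twMul_eq, tmul_smul]

lemma twMul_zero_left (w : B ⊗[K] B) : twMul ρ θ 0 w = 0 := by
  simp [twMul_eq]

lemma twMul_zero_right (w : B ⊗[K] B) : twMul ρ θ w 0 = 0 := by
  simp [twMul_eq]

lemma twMul_sum_left {α : Type*} (s : Finset α) (f : α → B ⊗[K] B) (w : B ⊗[K] B) :
    twMul ρ θ (∑ i ∈ s, f i) w = ∑ i ∈ s, twMul ρ θ (f i) w := by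
  simp [twMul_eq, sum_tmul]

lemma twMul_sum_right {α : Type*} (s : Finset α) (f : α → B ⊗[K] B) (w : B ⊗[K] B) :
    twMul ρ θ w (∑ i ∈ s, f i) = ∑ i ∈ s, twMul ρ θ w (f i) := by
  simp [twMul_eq, tmul_sum]

lemma twMul_tmul (a b a' b' : B) :
    twMul ρ θ (a ⊗ₜ[K] b) (a' ⊗ₜ[K] b') =
      (4 : K)⁻¹ • ∑ g : G, ∑ g' : G, θ g g' • ((a * ρ g a') ⊗ₜ[K] (ρ g' b * b')) := by
  simp [twMul]

lemma sum_GG {M : Type*} [AddCommMonoid M] (f : GG → M) :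
    ∑ g, f g = f g1 + f g2 + f g3 + f g4 := by
  have h : (Finset.univ : Finset GG) = {g1, g2, g3, g4} := by decide
  rw [h, Finset.sum_insert (by decide), Finset.sum_insert (by decide),
    Finset.sum_insert (by decide), Finset.sum_singleton, ← add_assoc, ← add_assoc]

omit [Fintype G] in
lemma rho_comp (g h : G) (t : B) : ρ g (ρ h t) = ρ (g * h) t := by
  rw [map_mul]; rfl

lemma hGGmul : ∀ a b : GG, a * (a * b) = b := by decide
lemma hGGsq : ∀ a : GG, a * a = 1 := by decide

lemma sum4_perm1 {M : Type*} [AddCommMonoid M] (F : GG → GG → GG → GG → M) :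
    (∑ g : GG, ∑ g' : GG, ∑ h : GG, ∑ h' : GG, F g g' h h')
      = ∑ g : GG, ∑ h' : GG, ∑ h : GG, ∑ g' : GG, F g g' h h' := by
  refine Finset.sum_congr rfl fun g _ => ?_
  calc (∑ g' : GG, ∑ h : GG, ∑ h' : GG, F g g' h h')
      = ∑ h : GG, ∑ g' : GG, ∑ h' : GG, F g g' h h' := Finset.sum_comm
    _ = ∑ h : GG, ∑ h' : GG, ∑ g' : GG, F g g' h h' :=
        Finset.sum_congr rfl fun h _ => Finset.sum_comm
    _ = ∑ h' : GG, ∑ h : GG, ∑ g' : GG, F g g' h h' := Finset.sum_comm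

lemma sum4_perm2 {M : Type*} [AddCommMonoid M] (F : GG → GG → GG → GG → M) :
    (∑ h : GG, ∑ h' : GG, ∑ g : GG, ∑ g' : GG, F g g' h h')
      = ∑ g : GG, ∑ h' : GG, ∑ h : GG, ∑ g' : GG, F g g' h h' := by
  calc (∑ h : GG, ∑ h' : GG, ∑ g : GG, ∑ g' : GG, F g g' h h')
      = ∑ h : GG, ∑ g : GG, ∑ h' : GG, ∑ g' : GG, F g g' h h' :=
        Finset.sum_congr rfl fun _ _ => Finset.sum_comm
    _ = ∑ g : GG, ∑ h : GG, ∑ h' : GG, ∑ g' : GG, F g g' h h' := Finset.sum_comm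
    _ = ∑ g : GG, ∑ h' : GG, ∑ h : GG, ∑ g' : GG, F g g' h h' :=
        Finset.sum_congr rfl fun _ _ => Finset.sum_comm

lemma twMul_assoc (ρ : GG →* (B →ₐ[K] B)) (θ : GG → GG → K)
    (hθl : ∀ g g' h : GG, θ (g * g') h = θ g h * θ g' h)
    (hθr : ∀ g h h' : GG, θ g (h * h') = θ g h * θ g h')
    (hθg1 : ∀ g : GG, θ g 1 = 1)
    (u v w : B ⊗[K] B) :
    twMul ρ θ (twMul ρ θ u v) w = twMul ρ θ u (twMul ρ θ v w) := by
  induction u using TensorProduct.induction_on with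
  | zero => simp [twMul_zero_left]
  | add p q hp hq => simp [twMul_add_left, hp, hq]
  | tmul a b =>
    induction v using TensorProduct.induction_on with
    | zero => simp [twMul_zero_left, twMul_zero_right]
    | add p q hp hq => simp [twMul_add_left, twMul_add_right, hp, hq]
    | tmul c d =>
      induction w using TensorProduct.induction_on with
      | zero => simp [twMul_zero_right]
      | add p q hp hq => simp [twMul_add_right, hp, hq]
      | tmul e f =>
        have rho_mul : ∀ (g : GG) (x y : B), ρ g (x * y) = ρ g x * ρ g y :=
          fun g x y => map_mul (ρ g) x y
        rw [twMul_tmul ρ θ a b c d, twMul_tmul ρ θ c d e f]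
        simp only [twMul_smul_left, twMul_smul_right, twMul_sum_left, twMul_sum_right,
          twMul_tmul, rho_mul, rho_comp, Finset.smul_sum]
        conv_lhs => rw [sum4_perm1]
        conv_rhs => rw [sum4_perm2]
        refine Finset.sum_congr rfl fun g _ => Finset.sum_congr rfl fun h' _ => ?_
        refine Fintype.sum_equiv (Equiv.mulLeft g) _ _ fun h => ?_
        simp only [Equiv.coe_mulLeft]
        refine Fintype.sum_equiv (Equiv.mulLeft h') _ _ fun g' => ?_
        simp only [Equiv.coe_mulLeft]
        rw [hGGmul g h]
        simp only [mul_assoc]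
        have hsq : θ g h' * θ g h' = 1 := by rw [← hθr, hGGsq h', hθg1]
        match_scalars
        rw [hθl g h h', hθr g h' g']
        linear_combination (-(4:K)⁻¹ * (4:K)⁻¹ * θ h h' * θ g g') * hsq

/-- Type synonym for the twisted tensor product. -/
def TwT (K : Type*) [Field K] (B : Type*) [Ring B] [Algebra K B] : Type _ := B ⊗[K] B

noncomputable instance : AddCommGroup (TwT K B) := inferInstanceAs (AddCommGroup (B ⊗[K] B))
noncomputable instance : Module K (TwT K B) := inferInstanceAs (Module K (B ⊗[K] B))

noncomputable def twRing
    (hassoc : ∀ u v w : B ⊗[K] B, twMul ρ θ (twMul ρ θ u v) w = twMul ρ θ u (twMul ρ θ v w))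
    (honel : ∀ z : B ⊗[K] B, twMul ρ θ ((1 : B) ⊗ₜ[K] (1 : B)) z = z)
    (honer : ∀ z : B ⊗[K] B, twMul ρ θ z ((1 : B) ⊗ₜ[K] (1 : B)) = z) :
    Ring (TwT K B) :=
  { (inferInstanceAs (AddCommGroup (TwT K B)) : AddCommGroup (TwT K B)) with
    mul := twMul ρ θ
    natCast := fun n => (((n : B) ⊗ₜ[K] (1 : B) : B ⊗[K] B) : TwT K B)
    natCast_zero := show ((0:ℕ) : B) ⊗ₜ[K] (1 : B) = (0 : B ⊗[K] B) by
      rw [Nat.cast_zero, zero_tmul]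
    natCast_succ := fun n => show (((n+1:ℕ) : B) ⊗ₜ[K] (1:B) : B ⊗[K] B)
        = ((n:ℕ) : B) ⊗ₜ[K] (1:B) + (1:B) ⊗ₜ[K] (1:B) by
      rw [Nat.cast_succ, add_tmul]
    intCast := fun n => (((n : B) ⊗ₜ[K] (1 : B) : B ⊗[K] B) : TwT K B)
    intCast_ofNat := fun n => show (((n:ℤ) : B) ⊗ₜ[K] (1:B) : B ⊗[K] B) = ((n:ℕ) : B) ⊗ₜ[K] (1:B) by
      rw [Int.cast_natCast]
    intCast_negSucc := fun n => show ((Int.negSucc n : B) ⊗ₜ[K] (1:B) : B ⊗[K] B)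
        = -(((n+1:ℕ) : B) ⊗ₜ[K] (1:B)) by
      rw [Int.cast_negSucc, neg_tmul]
    left_distrib := twMul_add_right ρ θ
    right_distrib := fun a b c => twMul_add_left ρ θ a b c
    zero_mul := twMul_zero_left ρ θ
    mul_zero := twMul_zero_right ρ θ
    mul_assoc := hassoc
    one := ((1 : B) ⊗ₜ[K] (1 : B) : B ⊗[K] B)
    one_mul := honel
    mul_one := honer }

noncomputable def twAlgebra
    (hassoc : ∀ u v w : B ⊗[K] B, twMul ρ θ (twMul ρ θ u v) w = twMul ρ θ u (twMul ρ θ v w))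
    (honel : ∀ z : B ⊗[K] B, twMul ρ θ ((1 : B) ⊗ₜ[K] (1 : B)) z = z)
    (honer : ∀ z : B ⊗[K] B, twMul ρ θ z ((1 : B) ⊗ₜ[K] (1 : B)) = z) :
    @Algebra K (TwT K B) _ (twRing ρ θ hassoc honel honer).toSemiring :=
  letI : Ring (TwT K B) := twRing ρ θ hassoc honel honer
  { smul := fun c (z : TwT K B) => (c • (z : B ⊗[K] B) : B ⊗[K] B)
    algebraMap := {
    toFun := fun c => (c • ((1 : B) ⊗ₜ[K] (1 : B)) : B ⊗[K] B)
    map_one' := one_smul _ _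
    map_mul' := fun r s => show ((r * s) • ((1 : B) ⊗ₜ[K] (1 : B)) : B ⊗[K] B) =
        twMul ρ θ (r • ((1 : B) ⊗ₜ[K] (1 : B))) (s • ((1 : B) ⊗ₜ[K] (1 : B))) by
      rw [twMul_smul_left, twMul_smul_right, honel, smul_smul]
    map_zero' := zero_smul K ((1 : B) ⊗ₜ[K] (1 : B) : B ⊗[K] B)
    map_add' := fun r s => add_smul r s ((1 : B) ⊗ₜ[K] (1 : B) : B ⊗[K] B) }
    commutes' := fun r (z : B ⊗[K] B) => show twMul ρ θ (r • ((1 : B) ⊗ₜ[K] (1 : B))) z =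
        twMul ρ θ z (r • ((1 : B) ⊗ₜ[K] (1 : B))) by
      rw [twMul_smul_left, twMul_smul_right, honel, honer]
    smul_def' := fun r (z : B ⊗[K] B) => show (r • z : B ⊗[K] B) = twMul ρ θ (r • ((1 : B) ⊗ₜ[K] (1 : B))) z by
      rw [twMul_smul_left, honel] }
end TwAux

open TwAux in
set_option maxHeartbeats 3000000 in
theorem stmt_13 {K : Type*} [Field K] (ι : K) (hι : IsPrimitiveRoot ι 4)
    (ζ : K) (hζ : ζ ^ 4 = 1)
    (ρ : GG →* (SecondAlg K ζ →ₐ[K] SecondAlg K ζ))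
    (hρ2x : ρ g2 (xS K ζ) = xS K ζ ^ 3) (hρ2y : ρ g2 (yS K ζ) = xS K ζ ^ 3 * yS K ζ)
    (hρ3x : ρ g3 (xS K ζ) = xS K ζ) (hρ3y : ρ g3 (yS K ζ) = xS K ζ ^ 2 * yS K ζ)
    (θ : GG → GG → K)
    (hθr : ∀ g h h' : GG, θ g (h * h') = θ g h * θ g h')
    (hθl : ∀ g g' h : GG, θ (g * g') h = θ g h * θ g' h)
    (hθ22 : θ g2 g2 = ζ ^ 2) (hθ23 : θ g2 g3 = -1)
    (hθ32 : θ g3 g2 = -1) (hθ33 : θ g3 g3 = 1)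
    (x' y' : SecondAlg K ζ ⊗[K] SecondAlg K ζ)
    (hx' : x' = (2 : K)⁻¹ •
      ((xS K ζ) ⊗ₜ[K] (xS K ζ) + (xS K ζ) ⊗ₜ[K] (xS K ζ ^ 3) +
        (xS K ζ ^ 3) ⊗ₜ[K] (xS K ζ) - (xS K ζ ^ 3) ⊗ₜ[K] (xS K ζ ^ 3)))
    (hy' : y' = (yS K ζ) ⊗ₜ[K] (yS K ζ)) :
    -- `x'⁴ = 1 ⊗ 1`
    twMul ρ θ (twMul ρ θ (twMul ρ θ x' x') x') x' =
        (1 : SecondAlg K ζ) ⊗ₜ[K] (1 : SecondAlg K ζ) ∧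
    -- `x'y' = y'x'³`
    twMul ρ θ x' y' = twMul ρ θ y' (twMul ρ θ (twMul ρ θ x' x') x') ∧
    -- `y'² = (1/2)(ζ(1 ⊗ 1) + x' - ζx'² + x'³)`
    twMul ρ θ y' y' = (2 : K)⁻¹ •
      (ζ • ((1 : SecondAlg K ζ) ⊗ₜ[K] (1 : SecondAlg K ζ)) + x' - ζ • twMul ρ θ x' x'
        + twMul ρ θ (twMul ρ θ x' x') x') ∧
    -- there is a unique algebra homomorphism `Δ : A → A ⊗̂ A` with `Δ(x) = x'`, `Δ(y) = y'`
    (∃! Δ : SecondAlg K ζ →ₗ[K] SecondAlg K ζ ⊗[K] SecondAlg K ζ,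
      Δ 1 = (1 : SecondAlg K ζ) ⊗ₜ[K] (1 : SecondAlg K ζ) ∧
      (∀ a b : SecondAlg K ζ, Δ (a * b) = twMul ρ θ (Δ a) (Δ b)) ∧
      Δ (xS K ζ) = x' ∧ Δ (yS K ζ) = y') := by
  -- nonzero scalars
  have h2 : (2:K) ≠ 0 := by
    intro h
    have h4 : ι^4 = 1 := hι.pow_eq_one
    have hne : ι^2 ≠ 1 := hι.pow_ne_one_of_pos_of_lt (by norm_num) (by norm_num)
    apply hne
    have h0 : (ι^2 - 1) * (ι^2 + 1) = 0 := by linear_combination h4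
    rcases mul_eq_zero.1 h0 with h' | h'
    · linear_combination h'
    · linear_combination h' - h
  have h4 : (4:K) ≠ 0 := by
    intro h
    have h22 : (2:K)*(2:K) = 0 := by linear_combination h
    rcases mul_eq_zero.1 h22 with h'|h' <;> exact h2 h'
  set X := xS K ζ with hXdef
  set Y := yS K ζ with hYdef
  -- defining relations
  have hx4 : X ^ 4 = 1 := by
    have h := RingQuot.mkAlgHom_rel K (SecondRel.x_pow_four (K := K) (ζ := ζ))
    rw [map_pow, map_one] at h
    exact h
  have hxy : X * Y = Y * X ^ 3 := by
    have h := RingQuot.mkAlgHom_rel K (SecondRel.x_mul_y (K := K) (ζ := ζ))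
    rw [map_mul, map_mul, map_pow] at h
    exact h
  have hyy : Y * Y = (2:K)⁻¹ • (ζ • (1 : SecondAlg K ζ) + X - ζ • X^2 + X^3) := by
    have h := RingQuot.mkAlgHom_rel K (SecondRel.y_sq (K := K) (ζ := ζ))
    simp only [map_pow, map_smul, map_add, map_sub, map_one] at h
    rw [← pow_two]
    exact h
  -- power arithmetic
  have hpow : ∀ i j k : ℕ, i + j = k ∨ i + j = k + 4 → X^i * X^j = X^k := by
    rintro i j k (h | h)
    · rw [← pow_add, h]
    · rw [← pow_add, h, pow_add, hx4, mul_one]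
  have hpow2 : ∀ k m : ℕ, k = m + 4 → X^k = X^m := by
    intro k m h; rw [h, pow_add, hx4, mul_one]
  have pw11 : X*X = X^2 := by simpa using hpow 1 1 2 (Or.inl rfl)
  have pw12 : X*X^2 = X^3 := by simpa using hpow 1 2 3 (Or.inl rfl)
  have pw13 : X*X^3 = 1 := by simpa using hpow 1 3 0 (Or.inr rfl)
  have pw21 : X^2*X = X^3 := by simpa using hpow 2 1 3 (Or.inl rfl)
  have pw22 : X^2*X^2 = 1 := by simpa using hpow 2 2 0 (Or.inr rfl)
  have pw23 : X^2*X^3 = X := by simpa using hpow 2 3 1 (Or.inr rfl)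
  have pw31 : X^3*X = 1 := by simpa using hpow 3 1 0 (Or.inr rfl)
  have pw32 : X^3*X^2 = X := by simpa using hpow 3 2 1 (Or.inr rfl)
  have pw33 : X^3*X^3 = X^2 := by simpa using hpow 3 3 2 (Or.inr rfl)
  have hX6 : X^6 = X^2 := hpow2 6 2 rfl
  have hX9 : X^9 = X := by
    have h := hpow2 9 5 rfl
    rw [h]; simpa using hpow2 5 1 rfl
  -- the action values
  have r1 : ∀ t : SecondAlg K ζ, ρ g1 t = t := by
    intro t
    rw [show g1 = (1:GG) from rfl, map_one]
    rfl
  have r2x2 : ρ g2 (X^2) = X^2 := by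
    rw [map_pow, hρ2x, ← pow_mul]; exact hX6
  have r2x3 : ρ g2 (X^3) = X := by
    rw [map_pow, hρ2x, ← pow_mul]; exact hX9
  have r3x2 : ρ g3 (X^2) = X^2 := by rw [map_pow, hρ3x]
  have r3x3 : ρ g3 (X^3) = X^3 := by rw [map_pow, hρ3x]
  have hg4 : g4 = g2 * g3 := by decide
  have r4x : ρ g4 X = X^3 := by
    rw [hg4, ← TwAux.rho_comp ρ, hρ3x, hρ2x]
  have r4x2 : ρ g4 (X^2) = X^2 := by
    rw [map_pow, r4x, ← pow_mul]; exact hX6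
  have r4x3 : ρ g4 (X^3) = X := by
    rw [map_pow, r4x, ← pow_mul]; exact hX9
  have r4y : ρ g4 Y = X*Y := by
    rw [hg4, ← TwAux.rho_comp ρ, hρ3y, map_mul, map_pow, hρ2x, hρ2y]
    have h32 : (X^3)^2 = X^2 := by rw [← pow_mul]; exact hX6
    rw [h32, ← mul_assoc, pw23]
  -- Y relations
  have yx1 : Y*X = X^3*Y := by
    have h1 : Y = X^3*(Y*X^3) := by rw [← hxy, ← mul_assoc, pw31, one_mul]
    calc Y*X = (X^3*(Y*X^3))*X := by rw [← h1]
      _ = X^3*(Y*(X^3*X)) := by rw [mul_assoc, mul_assoc]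
      _ = X^3*Y := by rw [pw31, mul_one]
  have yx2 : Y*X^2 = X^2*Y := by
    calc Y*X^2 = (Y*X)*X := by rw [mul_assoc, pw11]
      _ = (X^3*Y)*X := by rw [yx1]
      _ = X^3*(Y*X) := by rw [mul_assoc]
      _ = X^3*(X^3*Y) := by rw [yx1]
      _ = X^2*Y := by rw [← mul_assoc, pw33]
  have yx3 : Y*X^3 = X*Y := by
    calc Y*X^3 = (Y*X^2)*X := by rw [mul_assoc, pw21]
      _ = (X^2*Y)*X := by rw [yx2]
      _ = X^2*(Y*X) := by rw [mul_assoc]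
      _ = X^2*(X^3*Y) := by rw [yx1]
      _ = X*Y := by rw [← mul_assoc, pw23]
  have py11 : X*(X*Y) = X^2*Y := by rw [← mul_assoc, pw11]
  have py12 : X*(X^2*Y) = X^3*Y := by rw [← mul_assoc, pw12]
  have py13 : X*(X^3*Y) = Y := by rw [← mul_assoc, pw13, one_mul]
  have py21 : X^2*(X*Y) = X^3*Y := by rw [← mul_assoc, pw21]
  have py22 : X^2*(X^2*Y) = Y := by rw [← mul_assoc, pw22, one_mul]
  have py23 : X^2*(X^3*Y) = X*Y := by rw [← mul_assoc, pw23]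
  have py31 : X^3*(X*Y) = Y := by rw [← mul_assoc, pw31, one_mul]
  have py32 : X^3*(X^2*Y) = X*Y := by rw [← mul_assoc, pw32]
  have py33 : X^3*(X^3*Y) = X^2*Y := by rw [← mul_assoc, pw33]
  have yy1 : Y*(X*Y) = X^3*(Y*Y) := by rw [← mul_assoc, yx1, mul_assoc]
  have yy2 : Y*(X^2*Y) = X^2*(Y*Y) := by rw [← mul_assoc, yx2, mul_assoc]
  have yy3 : Y*(X^3*Y) = X*(Y*Y) := by rw [← mul_assoc, yx3, mul_assoc]
  -- the bicharacter table
  have th21 : θ g2 g1 = 1 := by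
    have h := hθr g2 g3 g3
    rw [show g3*g3 = g1 from by decide, hθ23] at h
    rw [h]; ring
  have th31 : θ g3 g1 = 1 := by
    have h := hθr g3 g3 g3
    rw [show g3*g3 = g1 from by decide, hθ33] at h
    rw [h]; ring
  have th41 : θ g4 g1 = 1 := by
    have h := hθl g2 g3 g1
    rw [show g2*g3 = g4 from by decide, th21, th31] at h
    rw [h]; ring
  have th11 : θ g1 g1 = 1 := by
    have h := hθl g2 g2 g1
    rw [show g2*g2 = g1 from by decide, th21] at h
    rw [h]; ring
  have th12 : θ g1 g2 = 1 := by
    have h := hθl g2 g2 g2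
    rw [show g2*g2 = g1 from by decide, hθ22] at h
    rw [h]; linear_combination hζ
  have th13 : θ g1 g3 = 1 := by
    have h := hθl g2 g2 g3
    rw [show g2*g2 = g1 from by decide, hθ23] at h
    rw [h]; ring
  have th14 : θ g1 g4 = 1 := by
    have h := hθr g1 g2 g3
    rw [show g2*g3 = g4 from by decide, th12, th13] at h
    rw [h]; ring
  have th24 : θ g2 g4 = -ζ^2 := by
    have h := hθr g2 g2 g3
    rw [show g2*g3 = g4 from by decide, hθ22, hθ23] at h
    rw [h]; ring
  have th34 : θ g3 g4 = -1 := by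
    have h := hθr g3 g2 g3
    rw [show g2*g3 = g4 from by decide, hθ32, hθ33] at h
    rw [h]; ring
  have th42 : θ g4 g2 = -ζ^2 := by
    have h := hθl g2 g3 g2
    rw [show g2*g3 = g4 from by decide, hθ22, hθ32] at h
    rw [h]; ring
  have th43 : θ g4 g3 = -1 := by
    have h := hθl g2 g3 g3
    rw [show g2*g3 = g4 from by decide, hθ23, hθ33] at h
    rw [h]; ring
  have th44 : θ g4 g4 = ζ^2 := by
    have h := hθr g4 g2 g3
    rw [show g2*g3 = g4 from by decide, th42, th43] at h
    rw [h]; ring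
  -- main computations
  have Hx2 : twMul ρ θ x' x' = (X^2) ⊗ₜ[K] (X^2) := by
    rw [hx']
    simp only [twMul_smul_left, twMul_smul_right, twMul_add_left, twMul_add_right,
      twMul_sub_left, twMul_sub_right, twMul_tmul, sum_GG, r1, hρ2x, r2x2, r2x3, hρ3x, r3x2, r3x3, r4x, r4x2, r4x3, hρ2y, hρ3y, r4y, th11, th12, th13, th14, th21, hθ22, hθ23, th24, th31, hθ32, hθ33, th34, th41, th42, th43, th44, pw11, pw12, pw13, pw21, pw22, pw23, pw31, pw32, pw33, tmul_add, tmul_sub, add_tmul, sub_tmul, tmul_smul, ← smul_tmul', one_smul, neg_smul, mul_one, one_mul]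
    match_scalars <;> field_simp <;> try ring
  have Hx3 : twMul ρ θ (twMul ρ θ x' x') x' =
      (2:K)⁻¹ • ((X^3) ⊗ₜ[K] (X^3) + X ⊗ₜ[K] (X^3) + (X^3) ⊗ₜ[K] X - X ⊗ₜ[K] X) := by
    rw [Hx2, hx']
    simp only [twMul_smul_left, twMul_smul_right, twMul_add_left, twMul_add_right,
      twMul_sub_left, twMul_sub_right, twMul_tmul, sum_GG, r1, hρ2x, r2x2, r2x3, hρ3x, r3x2, r3x3, r4x, r4x2, r4x3, hρ2y, hρ3y, r4y, th11, th12, th13, th14, th21, hθ22, hθ23, th24, th31, hθ32, hθ33, th34, th41, th42, th43, th44, pw11, pw12, pw13, pw21, pw22, pw23, pw31, pw32, pw33, tmul_add, tmul_sub, add_tmul, sub_tmul, tmul_smul, ← smul_tmul', one_smul, neg_smul, mul_one, one_mul]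
    match_scalars <;> field_simp <;> try ring
  have Hx4 : twMul ρ θ (twMul ρ θ (twMul ρ θ x' x') x') x' =
      (1 : SecondAlg K ζ) ⊗ₜ[K] (1 : SecondAlg K ζ) := by
    rw [Hx3, hx']
    simp only [twMul_smul_left, twMul_smul_right, twMul_add_left, twMul_add_right,
      twMul_sub_left, twMul_sub_right, twMul_tmul, sum_GG, r1, hρ2x, r2x2, r2x3, hρ3x, r3x2, r3x3, r4x, r4x2, r4x3, hρ2y, hρ3y, r4y, th11, th12, th13, th14, th21, hθ22, hθ23, th24, th31, hθ32, hθ33, th34, th41, th42, th43, th44, pw11, pw12, pw13, pw21, pw22, pw23, pw31, pw32, pw33, tmul_add, tmul_sub, add_tmul, sub_tmul, tmul_smul, ← smul_tmul', one_smul, neg_smul, mul_one, one_mul]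
    match_scalars <;> field_simp <;> try ring
  have Hxy : twMul ρ θ x' y' = (X*Y) ⊗ₜ[K] (X*Y) := by
    rw [hx', hy']
    simp only [twMul_smul_left, twMul_smul_right, twMul_add_left, twMul_add_right,
      twMul_sub_left, twMul_sub_right, twMul_tmul, sum_GG, r1, hρ2x, r2x2, r2x3, hρ3x, r3x2, r3x3, r4x, r4x2, r4x3, hρ2y, hρ3y, r4y, th11, th12, th13, th14, th21, hθ22, hθ23, th24, th31, hθ32, hθ33, th34, th41, th42, th43, th44, pw11, pw12, pw13, pw21, pw22, pw23, pw31, pw32, pw33, py11, py12, py13, py21, py22, py23, py31, py32, py33, tmul_add, tmul_sub, add_tmul, sub_tmul, tmul_smul, ← smul_tmul', one_smul, neg_smul, mul_one, one_mul]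
    match_scalars <;> field_simp <;> try ring
  have Hyx3 : twMul ρ θ y' (twMul ρ θ (twMul ρ θ x' x') x') = (X*Y) ⊗ₜ[K] (X*Y) := by
    rw [Hx3, hy']
    simp only [twMul_smul_left, twMul_smul_right, twMul_add_left, twMul_add_right,
      twMul_sub_left, twMul_sub_right, twMul_tmul, sum_GG, r1, hρ2x, r2x2, r2x3, hρ3x, r3x2, r3x3, r4x, r4x2, r4x3, hρ2y, hρ3y, r4y, th11, th12, th13, th14, th21, hθ22, hθ23, th24, th31, hθ32, hθ33, th34, th41, th42, th43, th44, pw11, pw12, pw13, pw21, pw22, pw23, pw31, pw32, pw33, py11, py12, py13, py21, py22, py23, py31, py32, py33, yx1, yx2, yx3, mul_assoc, tmul_add, tmul_sub, add_tmul, sub_tmul, tmul_smul, ← smul_tmul', one_smul, neg_smul, mul_one, one_mul]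
    match_scalars <;> field_simp <;> try ring
  have Hyy : twMul ρ θ y' y' = (2 : K)⁻¹ •
      (ζ • ((1 : SecondAlg K ζ) ⊗ₜ[K] (1 : SecondAlg K ζ)) + x' - ζ • twMul ρ θ x' x'
        + twMul ρ θ (twMul ρ θ x' x') x') := by
    rw [Hx3, Hx2, hy', hx']
    simp only [twMul_tmul, sum_GG, r1, hρ2y, hρ3y, r4y, th11, th12, th13, th14, th21,
      hθ22, hθ23, th24, th31, hθ32, hθ33, th34, th41, th42, th43, th44, yy1, yy2, yy3,
      mul_assoc]
    simp only [hyy, mul_smul_comm, mul_add, mul_sub, mul_one, pw11, pw12, pw13, pw21,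
      pw22, pw23, pw31, pw32, pw33]
    simp only [tmul_add, tmul_sub, add_tmul, sub_tmul, tmul_smul, ← smul_tmul', one_smul,
      neg_smul, smul_add, smul_sub]
    match_scalars <;> (try ring) <;> (try (field_simp; try ring)) <;>
      (first | linear_combination (16:K) * hζ | linear_combination (-(4:K)) * hζ | linear_combination (1:K) * hζ | linear_combination (-(1:K)) * hζ)
  have Hxyyx : twMul ρ θ x' y' = twMul ρ θ y' (twMul ρ θ (twMul ρ θ x' x') x') :=
    Hxy.trans Hyx3.symm
  refine ⟨Hx4, Hxyyx, Hyy, ?_⟩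
  -- unit laws
  have hθg1' : ∀ g : GG, θ g 1 = 1 := by
    have hall : ∀ g : GG, g = g1 ∨ g = g2 ∨ g = g3 ∨ g = g4 := by decide
    intro g
    have h1 : (1:GG) = g1 := rfl
    rw [h1]
    rcases hall g with h|h|h|h <;> rw [h]
    exacts [th11, th21, th31, th41]
  have honel : ∀ z : (SecondAlg K ζ) ⊗[K] (SecondAlg K ζ),
      twMul ρ θ ((1 : SecondAlg K ζ) ⊗ₜ[K] (1 : SecondAlg K ζ)) z = z := by
    intro z
    induction z using TensorProduct.induction_on with
    | zero => exact twMul_zero_right ρ θ _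
    | add u v hu hv => rw [twMul_add_right, hu, hv]
    | tmul a b =>
      rw [twMul_tmul]
      simp only [sum_GG, one_mul, map_one, r1, th11, th12, th13, th14, th21, hθ22, hθ23,
        th24, th31, hθ32, hθ33, th34, th41, th42, th43, th44, one_smul]
      match_scalars <;> (field_simp; try norm_num)
  have honer : ∀ z : (SecondAlg K ζ) ⊗[K] (SecondAlg K ζ),
      twMul ρ θ z ((1 : SecondAlg K ζ) ⊗ₜ[K] (1 : SecondAlg K ζ)) = z := by
    intro z
    induction z using TensorProduct.induction_on with
    | zero => exact twMul_zero_left ρ θ _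
    | add u v hu hv => rw [twMul_add_left, hu, hv]
    | tmul a b =>
      rw [twMul_tmul]
      simp only [sum_GG, mul_one, map_one, r1, th11, th12, th13, th14, th21, hθ22, hθ23,
        th24, th31, hθ32, hθ33, th34, th41, th42, th43, th44, one_smul]
      match_scalars <;> (field_simp; try norm_num)
  have hassoc : ∀ u v w : (SecondAlg K ζ) ⊗[K] (SecondAlg K ζ),
      twMul ρ θ (twMul ρ θ u v) w = twMul ρ θ u (twMul ρ θ v w) :=
    TwAux.twMul_assoc ρ θ hθl hθr hθg1'
  -- the twisted tensor product algebra
  letI instR : Ring (TwAux.TwT K (SecondAlg K ζ)) := TwAux.twRing ρ θ hassoc honel honer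
  letI instA : Algebra K (TwAux.TwT K (SecondAlg K ζ)) := TwAux.twAlgebra ρ θ hassoc honel honer
  -- the algebra map from the free algebra
  let f : FreeAlgebra K (Fin 2) →ₐ[K] TwAux.TwT K (SecondAlg K ζ) :=
    FreeAlgebra.lift K ![x', y']
  have hf0 : f (FreeAlgebra.ι K 0) = x' := by
    simp only [f, FreeAlgebra.lift_ι_apply, Matrix.cons_val_zero]
    rfl
  have hf1 : f (FreeAlgebra.ι K 1) = y' := by
    simp only [f, FreeAlgebra.lift_ι_apply, Matrix.cons_val_one, Matrix.head_cons]
    rfl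
  have hcube : ∀ z : TwAux.TwT K (SecondAlg K ζ), z^3 = (z*z)*z := fun z => by
    rw [pow_succ, pow_two]
  have hquad : ∀ z : TwAux.TwT K (SecondAlg K ζ), z^4 = ((z*z)*z)*z := fun z => by
    rw [pow_succ, hcube]
  have hrel : ∀ ⦃p q : FreeAlgebra K (Fin 2)⦄, SecondRel K ζ p q → f p = f q := by
    intro p q hpq
    cases hpq with
    | x_pow_four =>
      simp only [map_pow, map_one, hf0]
      erw [hquad]
      exact Hx4
    | x_mul_y =>
      simp only [map_mul, map_pow, hf0, hf1]
      erw [hcube]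
      exact Hxyyx
    | y_sq =>
      simp only [map_pow, map_smul, map_add, map_sub, map_one, hf0, hf1]
      have e3 := hcube x'
      have e2x := pow_two (M := TwAux.TwT K (SecondAlg K ζ)) x'
      have e2y := pow_two (M := TwAux.TwT K (SecondAlg K ζ)) y'
      have hfe : f (ζ • 1 + FreeAlgebra.ι K 0 - ζ • FreeAlgebra.ι K 0 ^ 2) =
          ζ • (1 : TwAux.TwT K (SecondAlg K ζ)) + (show TwAux.TwT K (SecondAlg K ζ) from x')
            - ζ • (show TwAux.TwT K (SecondAlg K ζ) from x') ^ 2 := by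
        rw [map_sub, map_add, map_smul, map_smul, map_one, map_pow, hf0]
        rfl
      refine e2y.trans (Hyy.trans ?_)
      exact (congrArg₂ (fun a b : TwAux.TwT K (SecondAlg K ζ) => (2:K)⁻¹ • (ζ • (1 : TwAux.TwT K (SecondAlg K ζ)) + (show TwAux.TwT K (SecondAlg K ζ) from x') - ζ • a + b)) e2x.symm e3.symm).trans
        (congrArg (fun c : TwAux.TwT K (SecondAlg K ζ) => (2:K)⁻¹ • (c + (show TwAux.TwT K (SecondAlg K ζ) from x') ^ 3)) hfe.symm)
  let Δa : SecondAlg K ζ →ₐ[K] TwAux.TwT K (SecondAlg K ζ) :=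
    RingQuot.liftAlgHom K ⟨f, hrel⟩
  have hΔaX : Δa X = x' := by
    show Δa (RingQuot.mkAlgHom K (SecondRel K ζ) (FreeAlgebra.ι K 0)) = x'
    rw [RingQuot.liftAlgHom_mkAlgHom_apply]
    exact hf0
  have hΔaY : Δa Y = y' := by
    show Δa (RingQuot.mkAlgHom K (SecondRel K ζ) (FreeAlgebra.ι K 1)) = y'
    rw [RingQuot.liftAlgHom_mkAlgHom_apply]
    exact hf1
  let ΔL : SecondAlg K ζ →ₗ[K] (SecondAlg K ζ) ⊗[K] (SecondAlg K ζ) :=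
    { toFun := fun a => Δa a
      map_add' := fun a b => map_add Δa a b
      map_smul' := fun r a => map_smul Δa r a }
  have hΔ1 : ΔL 1 = (1 : SecondAlg K ζ) ⊗ₜ[K] (1 : SecondAlg K ζ) := map_one Δa
  have hΔm : ∀ a b : SecondAlg K ζ, ΔL (a*b) = twMul ρ θ (ΔL a) (ΔL b) :=
    fun a b => map_mul Δa a b
  refine ⟨ΔL, ⟨hΔ1, hΔm, hΔaX, hΔaY⟩, ?_⟩
  rintro Δ' ⟨h1', hm', hx'', hy''⟩
  -- uniqueness: the algebra is generated by X and Y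
  have hadj : ∀ a : SecondAlg K ζ, a ∈ Algebra.adjoin K ({X, Y} : Set (SecondAlg K ζ)) := by
    intro a
    obtain ⟨p, rfl⟩ := RingQuot.mkAlgHom_surjective K (SecondRel K ζ) a
    exact FreeAlgebra.induction K (Fin 2)
      (motive := fun p => RingQuot.mkAlgHom K (SecondRel K ζ) p ∈
        Algebra.adjoin K ({X, Y} : Set (SecondAlg K ζ)))
      (fun r => by
        show RingQuot.mkAlgHom K (SecondRel K ζ) ((algebraMap K (FreeAlgebra K (Fin 2))) r) ∈ _
        rw [AlgHom.commutes]; exact Subalgebra.algebraMap_mem _ r)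
      (fun i => by
        fin_cases i
        · exact Algebra.subset_adjoin (Set.mem_insert _ _)
        · exact Algebra.subset_adjoin (Set.mem_insert_of_mem _ rfl))
      (fun a b ha hb => by
        show RingQuot.mkAlgHom K (SecondRel K ζ) (a * b) ∈ _
        rw [map_mul]; exact Subalgebra.mul_mem _ ha hb)
      (fun a b ha hb => by
        show RingQuot.mkAlgHom K (SecondRel K ζ) (a + b) ∈ _
        rw [map_add]; exact Subalgebra.add_mem _ ha hb)
      p
  refine LinearMap.ext fun a => ?_
  refine Algebra.adjoin_induction
    (fun t ht => ?_)
    (fun r => by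
      rw [Algebra.algebraMap_eq_smul_one, map_smul, map_smul, h1', hΔ1])
    (fun u v _ _ hu hv => by rw [map_add, map_add, hu, hv])
    (fun u v _ _ hu hv => by rw [hm' u v, hΔm u v, hu, hv])
    (hadj a)
  simp only [Set.mem_insert_iff, Set.mem_singleton_iff] at ht
  rcases ht with rfl | rfl
  · exact hx''.trans hΔaX.symm
  · exact hy''.trans hΔaY.symm
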